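/- Let n ≥ 1 be an integer, 1 ≤ p < ∞ and 0 ≤ β ≤ n. If f : ℝⁿ → ℂ has finite Morrey norm ‖f‖_{L^{p,β}} < ∞ and g ∈ L¹(ℝⁿ), then the convolution (f ∗ g)(x) = ∫_{ℝⁿ} f(x − z) g(z) dz is defined for almost every x ∈ ℝⁿ and satisfies the Young-type inequality ‖f ∗ g‖_{L^{p,β}} ≤ ‖g‖_{L¹} · ‖f‖_{L^{p,β}}. -/

import Mathlib

open MeasureTheory Metric ENNReal Filter Function

private lemma aux_iSup_min_natCast (a : ℝ≥0∞) : ⨆ k : ℕ, min a (k : ℝ≥0∞) = a := by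
  refine le_antisymm (iSup_le fun k => min_le_left _ _) ?_
  rcases eq_or_ne a ⊤ with rfl | ha
  · calc (⊤ : ℝ≥0∞) = ⨆ k : ℕ, (k : ℝ≥0∞) := ENNReal.iSup_natCast.symm
      _ ≤ _ := iSup_mono fun k => le_min le_top le_rfl
  · obtain ⟨k, hk⟩ := ENNReal.exists_nat_gt ha
    exact le_trans (le_of_eq (min_eq_left hk.le).symm)
      (le_iSup (fun k : ℕ => min a (k : ℝ≥0∞)) k)

private lemma aux_rpow_iSup {ι : Sort*} (a : ι → ℝ≥0∞) {c : ℝ} (hc : 0 < c) :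
    (⨆ i, a i) ^ c = ⨆ i, a i ^ c := by
  refine le_antisymm ?_ (iSup_le fun i => ENNReal.rpow_le_rpow (le_iSup a i) hc.le)
  have h1 : (⨆ i, a i) ≤ (⨆ i, a i ^ c) ^ (1 / c) := by
    refine iSup_le fun i => ?_
    have h2 := ENNReal.rpow_le_rpow (le_iSup (fun i => a i ^ c) i)
      (by positivity : (0:ℝ) ≤ 1 / c)
    rwa [← ENNReal.rpow_mul, mul_one_div, div_self hc.ne', ENNReal.rpow_one] at h2
  calc (⨆ i, a i) ^ c ≤ ((⨆ i, a i ^ c) ^ (1 / c)) ^ c := ENNReal.rpow_le_rpow h1 hc.le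
    _ = ⨆ i, a i ^ c := by
        rw [← ENNReal.rpow_mul, one_div_mul_cancel hc.ne', ENNReal.rpow_one]

/-- Minkowski's integral inequality for `ℝ≥0∞`-valued functions over finite measures. -/
private lemma aux_minkowski {X Z : Type*} [MeasurableSpace X] [MeasurableSpace Z]
    (μ : Measure X) (ν : Measure Z) [IsFiniteMeasure μ] [IsFiniteMeasure ν]
    {p : ℝ} (hp : 1 ≤ p) {F : X → Z → ℝ≥0∞}
    (hF : Measurable (uncurry F)) :
    (∫⁻ x, (∫⁻ z, F x z ∂ν) ^ p ∂μ) ^ (1 / p) ≤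
      ∫⁻ z, (∫⁻ x, F x z ^ p ∂μ) ^ (1 / p) ∂ν := by
  have hp0 : 0 < p := lt_of_lt_of_le one_pos hp
  have hFx : ∀ x, Measurable fun z => F x z := fun x => hF.comp measurable_prodMk_left
  have hFz : ∀ z, Measurable fun x => F x z := fun z => hF.comp measurable_prodMk_right
  rcases eq_or_lt_of_le hp with rfl | hp1
  · norm_num
    exact le_of_eq (lintegral_lintegral_swap hF.aemeasurable)
  -- now 1 < p
  set q : ℝ := p / (p - 1) with hq
  have hpq : p.HolderConjugate q := (Real.holderConjugate_iff_eq_conjExponent hp1).2 rfl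
  set Fk : ℕ → X → Z → ℝ≥0∞ := fun k x z => min (F x z) k with hFkdef
  have hFk : ∀ k, Measurable (uncurry (Fk k)) := fun k => hF.min measurable_const
  have hFkx : ∀ k x, Measurable fun z => Fk k x z :=
    fun k x => (hFk k).comp measurable_prodMk_left
  set Gk : ℕ → X → ℝ≥0∞ := fun k x => ∫⁻ z, Fk k x z ∂ν with hGkdef
  have hGk : ∀ k, Measurable (Gk k) := fun k => (hFk k).lintegral_prod_right'
  have hGk_mono : ∀ x, Monotone fun k => Gk k x := by
    intro x k l hkl
    exact lintegral_mono fun z => min_le_min le_rfl (by exact_mod_cast Nat.cast_le.2 hkl)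
  have hGk_sup : ∀ x, ⨆ k, Gk k x = ∫⁻ z, F x z ∂ν := by
    intro x
    rw [← lintegral_iSup (fun k => hFkx k x)
      (fun k l hkl z => min_le_min le_rfl (by exact_mod_cast Nat.cast_le.2 hkl))]
    exact lintegral_congr fun z => aux_iSup_min_natCast _
  set A : ℕ → ℝ≥0∞ := fun k => ∫⁻ x, Gk k x ^ p ∂μ with hAdef
  set S : ℝ≥0∞ := ∫⁻ z, (∫⁻ x, F x z ^ p ∂μ) ^ (1 / p) ∂ν with hSdef
  have hA_top : ∀ k, A k ≠ ⊤ := by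
    intro k
    have hb : ∀ x, Gk k x ^ p ≤ ((k : ℝ≥0∞) * ν Set.univ) ^ p := by
      intro x
      refine ENNReal.rpow_le_rpow ?_ hp0.le
      calc Gk k x ≤ ∫⁻ _, (k : ℝ≥0∞) ∂ν := lintegral_mono fun z => min_le_right _ _
        _ = (k : ℝ≥0∞) * ν Set.univ := lintegral_const _
    have : A k ≤ ((k : ℝ≥0∞) * ν Set.univ) ^ p * μ Set.univ := by
      calc A k ≤ ∫⁻ _, ((k : ℝ≥0∞) * ν Set.univ) ^ p ∂μ := lintegral_mono hb
        _ = _ := lintegral_const _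
    refine ne_top_of_le_ne_top ?_ this
    exact ENNReal.mul_ne_top (ENNReal.rpow_ne_top_of_nonneg hp0.le
      (ENNReal.mul_ne_top (ENNReal.natCast_ne_top k) (measure_ne_top ν _)))
      (measure_ne_top μ _)
  -- per-k bound
  have hkey : ∀ k, A k ^ (1 / p) ≤ S := by
    intro k
    have step1 : A k = ∫⁻ z, ∫⁻ x, Fk k x z * Gk k x ^ (p - 1) ∂μ ∂ν := by
      have e1 : ∀ x, Gk k x ^ p = ∫⁻ z, Fk k x z * Gk k x ^ (p - 1) ∂ν := by
        intro x
        rw [lintegral_mul_const _ (hFkx k x)]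
        have : Gk k x ^ p = Gk k x ^ (1 + (p - 1)) := by norm_num
        rw [this, ENNReal.rpow_add_of_nonneg _ _ zero_le_one (by linarith), ENNReal.rpow_one]
      calc A k = ∫⁻ x, ∫⁻ z, Fk k x z * Gk k x ^ (p - 1) ∂ν ∂μ := lintegral_congr e1
        _ = _ := lintegral_lintegral_swap
            (((hFk k).mul (((hGk k).comp measurable_fst).pow_const _)).aemeasurable)
    have step2 : ∀ z, ∫⁻ x, Fk k x z * Gk k x ^ (p - 1) ∂μ ≤
        (∫⁻ x, Fk k x z ^ p ∂μ) ^ (1 / p) * A k ^ (1 / q) := by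
      intro z
      have h := ENNReal.lintegral_mul_le_Lp_mul_Lq μ hpq
        (f := fun x => Fk k x z) (g := fun x => Gk k x ^ (p - 1))
        (((hFk k).comp (measurable_prodMk_right (y := z))).aemeasurable)
        (((hGk k).pow_const (p - 1)).aemeasurable)
      refine le_trans h (le_of_eq ?_)
      congr 1
      congr 1
      refine lintegral_congr fun x => ?_
      rw [← ENNReal.rpow_mul, hpq.sub_one_mul_conj]
    have step3 : A k ≤ S * A k ^ (1 / q) := by
      calc A k = ∫⁻ z, ∫⁻ x, Fk k x z * Gk k x ^ (p - 1) ∂μ ∂ν := step1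
        _ ≤ ∫⁻ z, (∫⁻ x, Fk k x z ^ p ∂μ) ^ (1 / p) * A k ^ (1 / q) ∂ν :=
            lintegral_mono step2
        _ = (∫⁻ z, (∫⁻ x, Fk k x z ^ p ∂μ) ^ (1 / p) ∂ν) * A k ^ (1 / q) := by
            rw [lintegral_mul_const]
            exact (Measurable.lintegral_prod_left' ((hFk k).pow_const _)).pow_const _
        _ ≤ S * A k ^ (1 / q) := by
            refine mul_le_mul_left (lintegral_mono fun z => ?_) _
            refine ENNReal.rpow_le_rpow (lintegral_mono fun x => ?_) (by positivity)
            exact ENNReal.rpow_le_rpow (min_le_left _ _) hp0.le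
    rcases eq_or_ne (A k) 0 with h0 | h0
    · rw [h0, ENNReal.zero_rpow_of_pos (by positivity)]; exact zero_le
    · have hq0 : (0:ℝ) < 1 / q := by
        have := hpq.symm.pos; positivity
      have hAq0 : A k ^ (1 / q) ≠ 0 := by
        simp [ENNReal.rpow_eq_zero_iff, h0, hq0, hA_top k, hq0.le]
      have hAqt : A k ^ (1 / q) ≠ ⊤ := ENNReal.rpow_ne_top_of_nonneg hq0.le (hA_top k)
      have hsplit : A k = A k ^ (1 / p) * A k ^ (1 / q) := by
        rw [← ENNReal.rpow_add_of_nonneg _ _ (by positivity : (0:ℝ) ≤ 1/p) hq0.le]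
        rw [one_div, one_div, hpq.inv_add_inv_eq_one, ENNReal.rpow_one]
      exact (ENNReal.mul_le_mul_iff_left hAq0 hAqt).1 (hsplit.symm.trans_le step3)
  -- pass to the limit
  have hsup : (∫⁻ x, (∫⁻ z, F x z ∂ν) ^ p ∂μ) = ⨆ k, A k := by
    rw [← lintegral_iSup (fun k => (hGk k).pow_const _)
      (fun k l hkl x => ENNReal.rpow_le_rpow (hGk_mono x hkl) hp0.le)]
    refine lintegral_congr fun x => ?_
    rw [← hGk_sup x, aux_rpow_iSup _ hp0]
  rw [hsup, aux_rpow_iSup _ (by positivity : (0:ℝ) < 1/p)]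
  exact iSup_le hkey

noncomputable def morreyA (n : ℕ) (p β : ℝ)
    (f : EuclideanSpace ℝ (Fin n) → ℂ)
    (y : EuclideanSpace ℝ (Fin n)) (r : ℝ) : ℝ≥0∞ :=
  ENNReal.ofReal (r ^ (-β)) * ∫⁻ x in ball y r, (‖f x‖₊ : ℝ≥0∞) ^ p

/-- The (global) Morrey norm `‖f‖_{L^{p,β}}`. -/
noncomputable def morreyNorm (n : ℕ) (p β : ℝ)
    (f : EuclideanSpace ℝ (Fin n) → ℂ) : ℝ≥0∞ :=
  ⨆ (y : EuclideanSpace ℝ (Fin n)) (r : ℝ) (_ : 0 < r),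
    (morreyA n p β f y r) ^ (1 / p)

/-- Young-type convolution inequality in Morrey spaces: if `‖f‖_{L^{p,β}} < ∞` and `g ∈ L¹`,
then `(f ∗ g)(x) = ∫ f(x−z) g(z) dz` is defined for a.e. `x` and
`‖f ∗ g‖_{L^{p,β}} ≤ ‖g‖_{L¹} · ‖f‖_{L^{p,β}}`. -/
theorem morrey_young_convolution (n : ℕ) (hn : 1 ≤ n) (p β : ℝ)
    (hp : 1 ≤ p) (hβ : 0 ≤ β) (hβn : β ≤ n)
    (f g : EuclideanSpace ℝ (Fin n) → ℂ) (hf : Measurable f)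
    (hfM : morreyNorm n p β f < ⊤) (hg : Integrable g) :
    (∀ᵐ x : EuclideanSpace ℝ (Fin n), Integrable (fun z => f (x - z) * g z)) ∧
    morreyNorm n p β (fun x => ∫ z, f (x - z) * g z) ≤
      (∫⁻ z, (‖g z‖₊ : ℝ≥0∞)) * morreyNorm n p β f := by
  classical
  have hp0 : 0 < p := lt_of_lt_of_le one_pos hp
  have hp0' : (0:ℝ) < 1 / p := by positivity
  set M : ℝ≥0∞ := morreyNorm n p β f with hMdef
  have hgae : AEMeasurable (fun z : EuclideanSpace ℝ (Fin n) => (‖g z‖₊ : ℝ≥0∞)) volume :=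
    hg.aestronglyMeasurable.enorm
  set w := hgae.mk _ with hwdef
  have hw_meas : Measurable w := hgae.measurable_mk
  have hw_ae : (fun z : EuclideanSpace ℝ (Fin n) => (‖g z‖₊ : ℝ≥0∞)) =ᵐ[volume] w :=
    hgae.ae_eq_mk
  set S : ℝ≥0∞ := ∫⁻ z, (‖g z‖₊ : ℝ≥0∞) with hSdef
  have hSw : ∫⁻ z, w z = S := (lintegral_congr_ae hw_ae).symm
  have hS_top : S ≠ ⊤ := hg.2.ne
  set ν : Measure (EuclideanSpace ℝ (Fin n)) := volume.withDensity w with hνdef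
  haveI : IsFiniteMeasure ν := isFiniteMeasure_withDensity (by rw [hSw]; exact hS_top)
  have hν_univ : ν Set.univ = S := by
    rw [hνdef, withDensity_apply _ MeasurableSet.univ, setLIntegral_univ, hSw]
  have hfm : Measurable fun q : (EuclideanSpace ℝ (Fin n)) × (EuclideanSpace ℝ (Fin n)) =>
      (‖f (q.1 - q.2)‖₊ : ℝ≥0∞) :=
    (hf.comp (measurable_fst.sub measurable_snd)).enorm
  set Φ : EuclideanSpace ℝ (Fin n) → ℝ≥0∞ :=
    fun x => ∫⁻ z, (‖f (x - z)‖₊ : ℝ≥0∞) ∂ν with hΦdef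
  have hΦm : Measurable Φ := hfm.lintegral_prod_right'
  have hΦ_eq : ∀ x, Φ x = ∫⁻ z, (‖f (x - z)‖₊ : ℝ≥0∞) * w z := by
    intro x
    have hsl : Measurable fun z : EuclideanSpace ℝ (Fin n) => (‖f (x - z)‖₊ : ℝ≥0∞) :=
      (hf.comp (measurable_const.sub measurable_id)).enorm
    rw [hΦdef]
    simp only []
    rw [hνdef, lintegral_withDensity_eq_lintegral_mul volume hw_meas hsl]
    exact lintegral_congr fun z => mul_comm _ _
  have htrans : ∀ (z y' : EuclideanSpace ℝ (Fin n)) (r : ℝ),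
      ∫⁻ x in ball y' r, (‖f (x - z)‖₊ : ℝ≥0∞) ^ p ∂volume
        = ∫⁻ x in ball (y' - z) r, (‖f x‖₊ : ℝ≥0∞) ^ p ∂volume := by
    intro z y' r
    have hmp : MeasurePreserving (fun x : EuclideanSpace ℝ (Fin n) => x - z) volume volume :=
      measurePreserving_sub_right volume z
    have hemb : MeasurableEmbedding (fun x : EuclideanSpace ℝ (Fin n) => x - z) :=
      (MeasurableEquiv.subRight z).measurableEmbedding
    have hpre : (fun x : EuclideanSpace ℝ (Fin n) => x - z) ⁻¹' ball (y' - z) r = ball y' r := by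
      ext x
      simp [mem_ball, dist_eq_norm, sub_sub_sub_cancel_right]
    calc ∫⁻ x in ball y' r, (‖f (x - z)‖₊ : ℝ≥0∞) ^ p ∂volume
        = ∫⁻ x in (fun x : EuclideanSpace ℝ (Fin n) => x - z) ⁻¹' ball (y' - z) r,
            (‖f (x - z)‖₊ : ℝ≥0∞) ^ p ∂volume := by rw [hpre]
      _ = _ := hmp.setLIntegral_comp_preimage_emb hemb (fun x => (‖f x‖₊ : ℝ≥0∞) ^ p) _
  have hIf : ∀ (y' : EuclideanSpace ℝ (Fin n)) (r : ℝ), 0 < r →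
      ∫⁻ x in ball y' r, (‖f x‖₊ : ℝ≥0∞) ^ p ∂volume
        ≤ (ENNReal.ofReal (r ^ (-β)))⁻¹ * M ^ p := by
    intro y' r hr
    have h1 : (morreyA n p β f y' r) ^ (1/p) ≤ M := by
      rw [hMdef, morreyNorm]
      exact le_iSup_of_le y' (le_iSup_of_le r (le_iSup_of_le hr le_rfl))
    have h2 : morreyA n p β f y' r ≤ M ^ p := by
      have h3 := ENNReal.rpow_le_rpow h1 hp0.le
      rwa [← ENNReal.rpow_mul, one_div_mul_cancel hp0.ne', ENNReal.rpow_one] at h3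
    have hc0 : ENNReal.ofReal (r ^ (-β)) ≠ 0 :=
      (ENNReal.ofReal_pos.2 (Real.rpow_pos_of_pos hr _)).ne'
    rw [morreyA] at h2
    calc ∫⁻ x in ball y' r, (‖f x‖₊ : ℝ≥0∞) ^ p ∂volume
        = (ENNReal.ofReal (r ^ (-β)))⁻¹ * (ENNReal.ofReal (r ^ (-β)) *
            ∫⁻ x in ball y' r, (‖f x‖₊ : ℝ≥0∞) ^ p ∂volume) := by
          rw [← mul_assoc, ENNReal.inv_mul_cancel hc0 ENNReal.ofReal_ne_top, one_mul]
      _ ≤ _ := mul_le_mul_right h2 _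
  have hkey : ∀ (y' : EuclideanSpace ℝ (Fin n)) (r : ℝ), 0 < r →
      (∫⁻ x in ball y' r, Φ x ^ p ∂volume) ^ (1/p)
        ≤ ((ENNReal.ofReal (r ^ (-β)))⁻¹) ^ (1/p) * (M * S) := by
    intro y' r hr
    haveI : IsFiniteMeasure
        (volume.restrict (ball y' r) : Measure (EuclideanSpace ℝ (Fin n))) :=
      ⟨by rw [Measure.restrict_apply_univ]; exact measure_ball_lt_top⟩
    have hmink := aux_minkowski (volume.restrict (ball y' r)) ν hp
      (F := fun x z => (‖f (x - z)‖₊ : ℝ≥0∞)) hfm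
    refine le_trans hmink ?_
    have hbound : ∀ z, (∫⁻ x in ball y' r, (‖f (x - z)‖₊ : ℝ≥0∞) ^ p ∂volume) ^ (1/p)
        ≤ ((ENNReal.ofReal (r ^ (-β)))⁻¹) ^ (1/p) * M := by
      intro z
      rw [htrans z y' r]
      calc (∫⁻ x in ball (y' - z) r, (‖f x‖₊ : ℝ≥0∞) ^ p ∂volume) ^ (1/p)
          ≤ ((ENNReal.ofReal (r ^ (-β)))⁻¹ * M ^ p) ^ (1/p) :=
            ENNReal.rpow_le_rpow (hIf (y' - z) r hr) hp0'.le
        _ = _ := by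
            rw [ENNReal.mul_rpow_of_nonneg _ _ hp0'.le, ← ENNReal.rpow_mul,
              mul_one_div, div_self hp0.ne', ENNReal.rpow_one]
    calc ∫⁻ z, (∫⁻ x in ball y' r, (‖f (x - z)‖₊ : ℝ≥0∞) ^ p ∂volume) ^ (1/p) ∂ν
        ≤ ∫⁻ _, ((ENNReal.ofReal (r ^ (-β)))⁻¹) ^ (1/p) * M ∂ν := lintegral_mono hbound
      _ = ((ENNReal.ofReal (r ^ (-β)))⁻¹) ^ (1/p) * M * S := by rw [lintegral_const, hν_univ]
      _ = _ := by rw [mul_assoc]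
  have hRHS_top : ∀ (r : ℝ), 0 < r →
      ((ENNReal.ofReal (r ^ (-β)))⁻¹) ^ (1/p) * (M * S) ≠ ⊤ := by
    intro r hr
    have hc0 : ENNReal.ofReal (r ^ (-β)) ≠ 0 :=
      (ENNReal.ofReal_pos.2 (Real.rpow_pos_of_pos hr _)).ne'
    exact ENNReal.mul_ne_top
      (ENNReal.rpow_ne_top_of_nonneg hp0'.le (ENNReal.inv_ne_top.2 hc0))
      (ENNReal.mul_ne_top hfM.ne hS_top)
  have hΦ_ae : ∀ᵐ x : EuclideanSpace ℝ (Fin n), Φ x < ⊤ := by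
    have hball : ∀ k : ℕ,
        ∀ᵐ x ∂(volume.restrict (ball (0 : EuclideanSpace ℝ (Fin n)) (k+1))), Φ x < ⊤ := by
      intro k
      have hrpos : (0:ℝ) < (k+1 : ℝ) := by positivity
      have h1 := hkey 0 (k+1) hrpos
      have h2 : ∫⁻ x in ball (0 : EuclideanSpace ℝ (Fin n)) (k+1), Φ x ^ p ∂volume ≠ ⊤ := by
        intro hcontra
        rw [hcontra, ENNReal.top_rpow_of_pos hp0'] at h1
        exact hRHS_top _ hrpos (top_le_iff.1 h1)
      have h3 := ae_lt_top (hΦm.pow_const p) h2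
      filter_upwards [h3] with x hx
      exact (ENNReal.rpow_lt_top_iff_of_pos hp0).1 hx
    have h4 : ∀ᵐ x : EuclideanSpace ℝ (Fin n), ∀ k : ℕ,
        x ∈ ball (0 : EuclideanSpace ℝ (Fin n)) (k+1) → Φ x < ⊤ :=
      ae_all_iff.2 fun k => (ae_restrict_iff' measurableSet_ball).1 (hball k)
    filter_upwards [h4] with x hx
    obtain ⟨k, hk⟩ := exists_nat_gt (dist x (0 : EuclideanSpace ℝ (Fin n)))
    exact hx k (mem_ball.2 (hk.trans_le (by push_cast; linarith)))
  have hΦ_eq' : ∀ x : EuclideanSpace ℝ (Fin n),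
      ∫⁻ z, (‖f (x - z) * g z‖₊ : ℝ≥0∞) ∂volume = Φ x := by
    intro x
    rw [hΦ_eq x]
    refine lintegral_congr_ae ?_
    filter_upwards [hw_ae] with z hz
    rw [← hz]
    simp [nnnorm_mul, ENNReal.coe_mul]
  constructor
  · filter_upwards [hΦ_ae] with x hx
    refine ⟨((hf.comp (measurable_const.sub measurable_id)).aestronglyMeasurable).mul
      hg.aestronglyMeasurable, ?_⟩
    show (∫⁻ z, (‖f (x - z) * g z‖₊ : ℝ≥0∞) ∂volume) < ⊤
    rw [hΦ_eq' x]
    exact hx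
  · have hh_le : ∀ x : EuclideanSpace ℝ (Fin n),
        (‖∫ z, f (x - z) * g z‖₊ : ℝ≥0∞) ≤ Φ x := by
      intro x
      calc (‖∫ z, f (x - z) * g z‖₊ : ℝ≥0∞)
          ≤ ∫⁻ z, (‖f (x - z) * g z‖₊ : ℝ≥0∞) ∂volume :=
            enorm_integral_le_lintegral_enorm _
        _ = Φ x := hΦ_eq' x
    rw [morreyNorm]
    refine iSup_le fun y => iSup_le fun r => iSup_le fun hr => ?_
    set c := ENNReal.ofReal (r ^ (-β)) with hcdef
    have hc0 : c ≠ 0 := (ENNReal.ofReal_pos.2 (Real.rpow_pos_of_pos hr _)).ne'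
    have hcT : c ≠ ⊤ := ENNReal.ofReal_ne_top
    have h1 : morreyA n p β (fun x => ∫ z, f (x - z) * g z) y r ≤
        c * ∫⁻ x in ball y r, Φ x ^ p ∂volume := by
      rw [morreyA]
      refine mul_le_mul_right (lintegral_mono fun x => ?_) _
      exact ENNReal.rpow_le_rpow (hh_le x) hp0.le
    calc morreyA n p β (fun x => ∫ z, f (x - z) * g z) y r ^ (1/p)
        ≤ (c * ∫⁻ x in ball y r, Φ x ^ p ∂volume) ^ (1/p) :=
          ENNReal.rpow_le_rpow h1 hp0'.le
      _ = c ^ (1/p) * (∫⁻ x in ball y r, Φ x ^ p ∂volume) ^ (1/p) :=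
          ENNReal.mul_rpow_of_nonneg _ _ hp0'.le
      _ ≤ c ^ (1/p) * ((c⁻¹) ^ (1/p) * (M * S)) :=
          mul_le_mul_right (hkey y r hr) _
      _ = (c * c⁻¹) ^ (1/p) * (M * S) := by
          rw [← mul_assoc, ← ENNReal.mul_rpow_of_nonneg _ _ hp0'.le]
      _ = S * M := by
          rw [ENNReal.mul_inv_cancel hc0 hcT, ENNReal.one_rpow, one_mul, mul_comm]
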